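/- Let c ∈ ℂ and let (f_n) be a sequence of complex numbers (arising as values f_n = f_n(z)) satisfying f_{n+2} = f_{n+1} f_n + c. Let M be a real number with M > 2 and M > √(2|c|). If there exists an index k with |f_k| > M and |f_{k+1}| > M, then for all n ≥ 0 one has |f_{k+n}| > 2·(M/2)^{F_n}, where F_n is the Fibonacci number with F_0 = F_1 = 1; in particular the sequence (f_n) is unbounded. -/

import Mathlib

theorem stmt0 (c : ℂ) (f : ℕ → ℂ)
    (hrec : ∀ n, f (n + 2) = f (n + 1) * f n + c)
    (M : ℝ) (hM2 : M > 2) (hMc : M > Real.sqrt (2 * ‖c‖))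
    (k : ℕ) (hk : ‖f k‖ > M) (hk1 : ‖f (k + 1)‖ > M) :
    (∀ n : ℕ, ‖f (k + n)‖ > 2 * (M / 2) ^ (Nat.fib (n + 1))) ∧
      ¬ BddAbove (Set.range fun n => ‖f n‖) := by
  have hM0 : (0:ℝ) < M := by linarith
  have hM1 : (1:ℝ) < M / 2 := by linarith
  have hcM : 2 * ‖c‖ < M ^ 2 := by
    have := (Real.sqrt_lt' hM0).mp hMc
    linarith
  have key : ∀ n : ℕ, ‖f (k + n)‖ > 2 * (M / 2) ^ (Nat.fib (n + 1)) := by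
    intro n
    induction n using Nat.twoStepInduction with
    | zero => simp only [Nat.fib_one, pow_one, Nat.add_zero]; linarith [hk]
    | one => rw [show Nat.fib (1+1) = 1 from rfl, pow_one]; linarith [hk1]
    | more n ih1 ih2 =>
      have e : k + (n + 2) = (k + n) + 2 := by ring
      rw [e, hrec (k + n)]
      set a := (M / 2) ^ Nat.fib (n + 2) with ha
      set b := (M / 2) ^ Nat.fib (n + 1) with hb
      have ha1 : M / 2 ≤ a := le_self_pow₀ (le_of_lt hM1) (Nat.fib_pos.mpr (by omega)).ne'
      have hb1 : M / 2 ≤ b := le_self_pow₀ (le_of_lt hM1) (Nat.fib_pos.mpr (by omega)).ne'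
      have hfib : Nat.fib (n + 2 + 1) = Nat.fib (n + 1) + Nat.fib (n + 2) := by
        rw [Nat.fib_add_two]
      have hab : (M / 2) ^ Nat.fib (n + 2 + 1) = b * a := by
        rw [hfib, pow_add]
      have tri : ‖f (k + n + 1)‖ * ‖f (k + n)‖ - ‖c‖
          ≤ ‖f (k + n + 1) * f (k + n) + c‖ := by
        have h := norm_add_le (f (k + n + 1) * f (k + n) + c) (-c)
        simp only [add_neg_cancel_right, norm_neg] at h
        rw [← norm_mul]
        linarith
      have ih2' : ‖f (k + n + 1)‖ > 2 * a := by
        have : k + (n + 1) = k + n + 1 := by ring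
        rw [← this]; exact ih2
      have hprod : ‖f (k + n + 1)‖ * ‖f (k + n)‖ > (2 * a) * (2 * b) := by
        have h1 : (0:ℝ) < 2 * a := by nlinarith
        have h2 : (0:ℝ) < 2 * b := by nlinarith
        exact mul_lt_mul'' ih2' ih1 (le_of_lt h1) (le_of_lt h2)
      rw [hab]
      have hc2 : ‖c‖ < 2 * (b * a) := by nlinarith
      nlinarith
  refine ⟨key, ?_⟩
  rintro ⟨B, hB⟩
  have hfibn : ∀ n : ℕ, n ≤ Nat.fib (n + 1) := by
    intro n
    induction n with
    | zero => simp
    | succ m ih =>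
      rcases Nat.eq_zero_or_pos m with h | h
      · subst h; simp
      · have h1 : 1 ≤ Nat.fib m := Nat.fib_pos.mpr h
        rw [Nat.fib_add_two]; omega
  obtain ⟨n, hn⟩ := pow_unbounded_of_one_lt B hM1
  have h1 : (M / 2) ^ n ≤ (M / 2) ^ Nat.fib (n + 1) :=
    pow_le_pow_right₀ (le_of_lt hM1) (hfibn n)
  have h2 := key n
  have h3 : ‖f (k + n)‖ ≤ B := hB ⟨k + n, rfl⟩
  have hpos : (0:ℝ) < (M / 2) ^ n := by positivity
  nlinarith
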